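/- arXiv:math/0702738 — 2 statements merged into one kernel-verified Lean document; each statement's English description precedes it below -/
import Mathlib

section
/- Let J be a symmetric 3×3 real matrix and define the nonstandard moment of inertia matrix J_d = (1/2)·tr(J)·I₃ − J. Then for every Ω ∈ ℝ³, S(Ω)·J_d + J_d·S(Ω) = S(JΩ), where S denotes the hat map. -/
open Matrix

def hat (x : Fin 3 → ℝ) : Matrix (Fin 3) (Fin 3) ℝ :=
  !![0, -x 2, x 1; x 2, 0, -x 0; -x 1, x 0, 0]

/-- For symmetric `J` and `Jd = (1/2) tr(J) I₃ - J`, one has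
`S(Ω) Jd + Jd S(Ω) = S(J Ω)` for every `Ω ∈ ℝ³`. -/
theorem hat_mul_Jd_add_Jd_mul_hat
    (J : Matrix (Fin 3) (Fin 3) ℝ) (hJ : J.IsSymm)
    (Jd : Matrix (Fin 3) (Fin 3) ℝ)
    (hJd : Jd = ((1 : ℝ) / 2 * J.trace) • (1 : Matrix (Fin 3) (Fin 3) ℝ) - J)
    (Ω : Fin 3 → ℝ) :
    hat Ω * Jd + Jd * hat Ω = hat (J.mulVec Ω) := by
  have h01 : J 0 1 = J 1 0 := by rw [← hJ.apply]
  have h02 : J 0 2 = J 2 0 := by rw [← hJ.apply]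
  have h12 : J 1 2 = J 2 1 := by rw [← hJ.apply]
  subst hJd
  ext i j
  fin_cases i <;> fin_cases j <;>
    simp [hat, Matrix.mul_apply, Matrix.mulVec, Matrix.trace, Matrix.one_apply,
      Fin.sum_univ_three, dotProduct, Matrix.diag, Matrix.vecMul, Matrix.sub_apply, Matrix.smul_apply, h01, h02, h12] <;> ring
end

section
/- Let R and V be 3×3 real matrices and let r_i ∈ ℝ³ and v_i ∈ ℝ³ (i = 1,2,3) denote the i-th rows of R and V respectively. Then S(r_1 × v_1 + r_2 × v_2 + r_3 × v_3) = Vᵀ R − Rᵀ V, where S is the hat map. In particular, the moment due to a potential U, defined by M = r_1 × u_{r_1} + r_2 × u_{r_2} + r_3 × u_{r_3} with u_{r_i} the i-th row of ∂U/∂R, satisfies S(M) = (∂U/∂R)ᵀ R − Rᵀ (∂U/∂R). -/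
open Matrix

/-- For 3×3 real matrices `R` and `V` with rows `r_i`, `v_i`,
one has `S(r₁ × v₁ + r₂ × v₂ + r₃ × v₃) = Vᵀ R − Rᵀ V`. In particular the
moment `M = ∑ r_i × u_{r_i}` due to a potential satisfies
`S(M) = (∂U/∂R)ᵀ R − Rᵀ (∂U/∂R)`. -/
theorem hat_sum_rows_cross_eq
    (R V : Matrix (Fin 3) (Fin 3) ℝ) :
    hat (∑ i, crossProduct (fun j => R i j) (fun j => V i j)) = Vᵀ * R - Rᵀ * V := by
  ext i j
  fin_cases i <;> fin_cases j <;>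
    simp [hat, crossProduct, mul_apply, Fin.sum_univ_three, Matrix.sub_apply, transpose_apply] <;>
    ring
end
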